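/- Let α be a finite nonempty type and let μ and ν be probability measures on α. Then every coupling γ of μ and ν satisfies γ {z : α × α | z.1 = z.2} ≤ ∑_{a : α} min (μ {a}) (ν {a}), and there exists a coupling γ of μ and ν for which γ {z | z.1 = z.2} = ∑_{a : α} min (μ {a}) (ν {a}). In particular, the maximal probability that two random variables with distributions μ and ν coincide, over all couplings, equals ∑_{a} min (μ {a}) (ν {a}). -/

import Mathlib

open MeasureTheory
open scoped ENNReal

lemma meas_finset_sum {α : Type*} [MeasurableSpace α] [MeasurableSingletonClass α]
    (μ : Measure α) (s : Finset α) : μ ↑s = ∑ a ∈ s, μ {a} := by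
  have h : (↑s : Set α) = ⋃ a ∈ s, {a} := by ext x; simp
  rw [h, measure_biUnion_finset ?_ fun a _ => measurableSet_singleton a]
  intro a _ b _ hab
  simp [Set.disjoint_singleton, hab]

lemma meas_ext_singleton {α : Type*} [Fintype α] [MeasurableSpace α]
    [MeasurableSingletonClass α] {μ ν : Measure α} (h : ∀ a, μ {a} = ν {a}) : μ = ν := by
  classical
  ext s hs
  have hfin : s.Finite := Set.toFinite s
  rw [← hfin.coe_toFinset, meas_finset_sum, meas_finset_sum]
  exact Finset.sum_congr rfl fun a _ => h a

/-- The maximal probability that two random variables with distributions `μ` and `ν`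
on a finite type coincide, over all couplings, equals `∑ a, min (μ {a}) (ν {a})`. -/
theorem maximal_coupling_finite {α : Type*} [Fintype α] [Nonempty α]
    [MeasurableSpace α] [MeasurableSingletonClass α]
    (μ ν : Measure α) [IsProbabilityMeasure μ] [IsProbabilityMeasure ν] :
    (∀ γ : Measure (α × α), IsProbabilityMeasure γ →
      γ.map Prod.fst = μ → γ.map Prod.snd = ν →
      (γ {z : α × α | z.1 = z.2}).toReal ≤ ∑ a : α, min (μ {a}).toReal (ν {a}).toReal) ∧
    (∃ γ : Measure (α × α), IsProbabilityMeasure γ ∧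
      γ.map Prod.fst = μ ∧ γ.map Prod.snd = ν ∧
      (γ {z : α × α | z.1 = z.2}).toReal = ∑ a : α, min (μ {a}).toReal (ν {a}).toReal) := by
  classical
  set m : α → ℝ≥0∞ := fun a => min (μ {a}) (ν {a}) with hm
  set p : ℝ≥0∞ := ∑ a : α, m a with hpdef
  have hμ1 : ∑ a : α, μ {a} = 1 := by
    rw [← meas_finset_sum μ Finset.univ]; simp
  have hν1 : ∑ a : α, ν {a} = 1 := by
    rw [← meas_finset_sum ν Finset.univ]; simp
  have hple : p ≤ 1 := by
    rw [hpdef, ← hμ1]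
    exact Finset.sum_le_sum fun a _ => min_le_left _ _
  have hpfin : p ≠ ⊤ := (lt_of_le_of_lt hple ENNReal.one_lt_top).ne
  have hmfin : ∀ a, m a ≠ ⊤ := fun a =>
    (lt_of_le_of_lt (min_le_left _ _) (measure_lt_top μ _)).ne
  have hsum_eq : ∑ a : α, min (μ {a}).toReal (ν {a}).toReal = p.toReal := by
    rw [hpdef, ENNReal.toReal_sum fun a _ => hmfin a]
    exact Finset.sum_congr rfl fun a _ =>
      (ENNReal.toReal_min (measure_ne_top μ _) (measure_ne_top ν _)).symm
  constructor
  · intro γ hγprob hfst hsnd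
    have hDeq : {z : α × α | z.1 = z.2} = ⋃ a : α, {(a, a)} := by
      ext ⟨x, y⟩
      simp [Prod.ext_iff, eq_comm]
    have hγD : γ {z : α × α | z.1 = z.2} = ∑ a : α, γ {(a, a)} := by
      rw [hDeq, measure_iUnion ?_ fun a => measurableSet_singleton _, tsum_fintype]
      intro a b hab
      simp [Function.onFun, Set.disjoint_singleton, Prod.ext_iff, hab]
    have hbound : ∀ a : α, γ {((a : α), a)} ≤ m a := by
      intro a
      refine le_min ?_ ?_
      · rw [← hfst, Measure.map_apply measurable_fst (measurableSet_singleton a)]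
        refine measure_mono ?_
        rintro ⟨x, y⟩ hz
        simp only [Set.mem_singleton_iff, Prod.ext_iff] at hz
        simp [hz.1]
      · rw [← hsnd, Measure.map_apply measurable_snd (measurableSet_singleton a)]
        refine measure_mono ?_
        rintro ⟨x, y⟩ hz
        simp only [Set.mem_singleton_iff, Prod.ext_iff] at hz
        simp [hz.2]
    rw [hsum_eq]
    refine ENNReal.toReal_mono hpfin ?_
    rw [hγD, hpdef]
    exact Finset.sum_le_sum fun a _ => hbound a
  · set μ' : α → ℝ≥0∞ := fun a => μ {a} - m a with hμ'def
    set ν' : α → ℝ≥0∞ := fun a => ν {a} - m a with hν'def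
    have hμ'add : ∀ a, m a + μ' a = μ {a} := fun a =>
      add_tsub_cancel_of_le (min_le_left _ _)
    have hν'add : ∀ a, m a + ν' a = ν {a} := fun a =>
      add_tsub_cancel_of_le (min_le_right _ _)
    have hμ'sum : ∑ a : α, μ' a = 1 - p := by
      have : p + ∑ a : α, μ' a = 1 := by
        rw [hpdef, ← Finset.sum_add_distrib]
        rw [← hμ1]
        exact Finset.sum_congr rfl fun a _ => hμ'add a
      rw [← this, ENNReal.add_sub_cancel_left hpfin]
    have hν'sum : ∑ a : α, ν' a = 1 - p := by
      have : p + ∑ a : α, ν' a = 1 := by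
        rw [hpdef, ← Finset.sum_add_distrib]
        rw [← hν1]
        exact Finset.sum_congr rfl fun a _ => hν'add a
      rw [← this, ENNReal.add_sub_cancel_left hpfin]
    -- key cancellation
    have hfix : ∀ x : ℝ≥0∞, x ≤ 1 - p → (1 - p)⁻¹ * x * (1 - p) = x := by
      intro x hx
      rcases eq_or_lt_of_le hple with hp1 | hplt
      · have : x = 0 := le_antisymm (by simpa [← hp1] using hx) zero_le
        simp [this]
      · have h0 : (1 : ℝ≥0∞) - p ≠ 0 := by
          simpa [tsub_eq_zero_iff_le] using not_le_of_gt hplt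
        have hinf : (1 : ℝ≥0∞) - p ≠ ⊤ := by
          exact (lt_of_le_of_lt tsub_le_self ENNReal.one_lt_top).ne
        rw [mul_comm ((1 - p)⁻¹) x, mul_assoc, ENNReal.inv_mul_cancel h0 hinf, mul_one]
    have hμ'le : ∀ a, μ' a ≤ 1 - p := fun a => by
      rw [← hμ'sum]
      exact Finset.single_le_sum (fun b _ => zero_le) (Finset.mem_univ a)
    have hν'le : ∀ a, ν' a ≤ 1 - p := fun a => by
      rw [← hν'sum]
      exact Finset.single_le_sum (fun b _ => zero_le) (Finset.mem_univ a)
    set w : α × α → ℝ≥0∞ :=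
      fun z => (if z.1 = z.2 then m z.1 else 0) + (1 - p)⁻¹ * μ' z.1 * ν' z.2 with hwdef
    set γ : Measure (α × α) := ∑ z : α × α, w z • Measure.dirac z with hγdef
    have hγapp : ∀ S : Set (α × α), γ S = ∑ z : α × α, S.indicator w z := by
      intro S
      rw [hγdef, Measure.finset_sum_apply]
      refine Finset.sum_congr rfl fun z _ => ?_
      rw [Measure.smul_apply, Measure.dirac_apply, Set.indicator_apply, Set.indicator_apply]
      by_cases h : z ∈ S <;> simp [h]
    -- row sums
    have hrow : ∀ a : α, ∑ b : α, w (a, b) = μ {a} := by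
      intro a
      rw [hwdef]
      simp only
      rw [Finset.sum_add_distrib]
      have h1 : ∑ b : α, (if a = b then m a else 0) = m a := by simp
      have h2 : ∑ b : α, (1 - p)⁻¹ * μ' a * ν' b = μ' a := by
        rw [← Finset.mul_sum, hν'sum, hfix _ (hμ'le a)]
      rw [h1, h2, hμ'add]
    have hcol : ∀ b : α, ∑ a : α, w (a, b) = ν {b} := by
      intro b
      rw [hwdef]
      simp only
      rw [Finset.sum_add_distrib]
      have h1 : ∑ a : α, (if a = b then m a else 0) = m b := by simp
      have h2 : ∑ a : α, (1 - p)⁻¹ * μ' a * ν' b = ν' b := by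
        have : ∀ a : α, (1 - p)⁻¹ * μ' a * ν' b = (1 - p)⁻¹ * ν' b * μ' a := fun a => by ring
        rw [Finset.sum_congr rfl fun a _ => this a, ← Finset.mul_sum, hμ'sum,
          hfix _ (hν'le b)]
      rw [h1, h2, hν'add]
    have hγprob : IsProbabilityMeasure γ := by
      constructor
      rw [hγapp]
      simp only [Set.indicator_univ]
      rw [Fintype.sum_prod_type]
      rw [Finset.sum_congr rfl fun a _ => hrow a, hμ1]
    have hγfst : γ.map Prod.fst = μ := by
      refine meas_ext_singleton fun a => ?_
      rw [Measure.map_apply measurable_fst (measurableSet_singleton a), hγapp]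
      rw [Fintype.sum_prod_type]
      have : ∀ x : α, ∑ y : α, (Prod.fst ⁻¹' {a}).indicator w (x, y)
          = if x = a then ∑ y : α, w (x, y) else 0 := by
        intro x
        by_cases hx : x = a <;> simp [Set.indicator_apply, hx]
      rw [Finset.sum_congr rfl fun x _ => this x, Finset.sum_ite_eq' Finset.univ a
        (fun x => ∑ y : α, w (x, y))]
      simp [hrow a]
    have hγsnd : γ.map Prod.snd = ν := by
      refine meas_ext_singleton fun b => ?_
      rw [Measure.map_apply measurable_snd (measurableSet_singleton b), hγapp]
      rw [Fintype.sum_prod_type_right]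
      have : ∀ y : α, ∑ x : α, (Prod.snd ⁻¹' {b}).indicator w (x, y)
          = if y = b then ∑ x : α, w (x, y) else 0 := by
        intro y
        by_cases hy : y = b <;> simp [Set.indicator_apply, hy]
      rw [Finset.sum_congr rfl fun y _ => this y, Finset.sum_ite_eq' Finset.univ b
        (fun y => ∑ x : α, w (x, y))]
      simp [hcol b]
    have hdiagzero : ∀ a : α, μ' a * ν' a = 0 := by
      intro a
      rcases le_total (μ {a}) (ν {a}) with h | h
      · have : μ' a = 0 := by
          rw [hμ'def]
          simp [hm, min_eq_left h]
        simp [this]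
      · have : ν' a = 0 := by
          rw [hν'def]
          simp [hm, min_eq_right h]
        simp [this]
    have hγdiag : γ {z : α × α | z.1 = z.2} = p := by
      rw [hγapp, Fintype.sum_prod_type]
      have : ∀ x : α, ∑ y : α, ({z : α × α | z.1 = z.2}).indicator w (x, y)
          = if x = x then w (x, x) else 0 := by
        intro x
        rw [Finset.sum_eq_single x]
        · simp [Set.indicator_apply]
        · intro y _ hy
          simp [Set.indicator_apply, Ne.symm hy]
        · simp
      rw [Finset.sum_congr rfl fun x _ => this x]
      simp only [if_true]
      rw [hpdef]
      refine Finset.sum_congr rfl fun a _ => ?_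
      rw [hwdef]
      simp [hdiagzero a, mul_assoc]
    exact ⟨γ, hγprob, hγfst, hγsnd, by rw [hγdiag, hsum_eq]⟩
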